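/- For every positive integer m and integer p ≥ 1, the endomorphism t(m,p) of the space of integer-valued class functions on Σ_m, given by the sum over all ordered p-tuples (i₁,…,i_p) with i₁+⋯+i_p = m of Ind ∘ Res along the Young subgroup Σ_{i₁} × ⋯ × Σ_{i_p}, is diagonal in the basis of characteristic functions of conjugacy classes, with eigenvalue p^{l_c} on the class c, where l_c is the number of cycles in the cycle type of c. -/

import Mathlib

open Equiv

/-- Block label of `k` for the composition `i = (i₁,…,i_p)`: the index of the block of
consecutive integers of sizes `i₁,…,i_p` containing `k`. -/
def blockLabel {p : ℕ} (i : Fin p → ℕ) (k : ℕ) : ℕ :=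
  (Finset.univ.filter fun j : Fin p => (∑ j' ∈ Finset.univ.filter (· ≤ j), i j') ≤ k).card

/-- The Young subgroup `Σ_{i₁} × ⋯ × Σ_{i_p} ≤ Σ_m`, embedded blockwise. -/
def youngSubgroup (m p : ℕ) (i : Fin p → ℕ) : Subgroup (Perm (Fin m)) where
  carrier := {σ | ∀ k : Fin m, blockLabel i (σ k : ℕ) = blockLabel i (k : ℕ)}
  one_mem' := by intro k; rfl
  mul_mem' := by
    intro a b ha hb k
    simpa [Perm.mul_apply] using (ha (b k)).trans (hb k)
  inv_mem' := by
    intro a ha k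
    simpa using (ha (a⁻¹ k)).symm

/-- Integer-valued class functions on a group `G`. -/
def IntClassFun (G : Type*) [Group G] : Type _ :=
  {f : G → ℤ // ∀ x y : G, f (y * x * y⁻¹) = f x}

open Classical

/-- `Ind_H^G ∘ Res_H^G` applied to a class function `f`, evaluated at `x`:
`Σ_{s ∈ H\G} f₀(s⁻¹ x s)`, where `f₀` is the restriction of `f` to `H` extended by
zero; the sum is over the cosets of `H` in `G`. -/
noncomputable def indRes {G : Type*} [Group G] (H : Subgroup G)
    (f : IntClassFun G) (x : G) : ℤ :=
  ∑ᶠ q : G ⧸ H, Quotient.liftOn' q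
    (fun s => if s⁻¹ * x * s ∈ H then f.1 (s⁻¹ * x * s) else 0)
    (by
      intro s t hst
      have h1 : s⁻¹ * t ∈ H := QuotientGroup.leftRel_apply.mp hst
      have key : t⁻¹ * x * t = (s⁻¹ * t)⁻¹ * (s⁻¹ * x * s) * (s⁻¹ * t) := by group
      show (if s⁻¹ * x * s ∈ H then f.1 (s⁻¹ * x * s) else 0)
          = (if t⁻¹ * x * t ∈ H then f.1 (t⁻¹ * x * t) else 0)
      rw [key]
      by_cases hc : s⁻¹ * x * s ∈ H
      · rw [if_pos hc, if_pos (H.mul_mem (H.mul_mem (H.inv_mem h1) hc) h1)]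
        simpa using (f.2 (s⁻¹ * x * s) (s⁻¹ * t)⁻¹).symm
      · have hnc : ¬ (s⁻¹ * t)⁻¹ * (s⁻¹ * x * s) * (s⁻¹ * t) ∈ H := by
          intro hmem
          apply hc
          have hs : s⁻¹ * x * s =
              (s⁻¹ * t) * ((s⁻¹ * t)⁻¹ * (s⁻¹ * x * s) * (s⁻¹ * t)) * (s⁻¹ * t)⁻¹ := by
            group
          rw [hs]
          exact H.mul_mem (H.mul_mem h1 hmem) (H.inv_mem h1)
        rw [if_neg hc, if_neg hnc])

/-- The number of cycles of `g ∈ Σ_m`, counting fixed points as `1`-cycles. -/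
def numCycles {m : ℕ} (g : Perm (Fin m)) : ℕ :=
  g.cycleType.card + (m - g.cycleType.sum)



/-! ### Auxiliary lemmas -/

section Aux

open Finset

variable {m p : ℕ}

noncomputable instance fintypeQuotOfFinite {G : Type*} [Group G] [Finite G] (H : Subgroup G) :
    Fintype (G ⧸ H) := Fintype.ofFinite _

lemma mem_youngSubgroup {i : Fin p → ℕ} {σ : Perm (Fin m)} :
    σ ∈ youngSubgroup m p i ↔ ∀ k : Fin m, blockLabel i (σ k : ℕ) = blockLabel i (k : ℕ) :=
  Iff.rfl

/-- Partial sums of a composition. -/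
def psum (i : Fin p → ℕ) (t : ℕ) : ℕ :=
  ∑ j ∈ Finset.univ.filter (fun j : Fin p => (j : ℕ) < t), i j

lemma psum_mono (i : Fin p → ℕ) {t t' : ℕ} (h : t ≤ t') : psum i t ≤ psum i t' :=
  Finset.sum_le_sum_of_subset (fun j hj => by
    simp only [Finset.mem_filter, Finset.mem_univ, true_and] at hj ⊢
    omega)

lemma psum_zero (i : Fin p → ℕ) : psum i 0 = 0 := by simp [psum]

lemma psum_succ (i : Fin p → ℕ) (c : Fin p) :
    psum i ((c : ℕ) + 1) = psum i (c : ℕ) + i c := by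
  unfold psum
  have h : Finset.univ.filter (fun j : Fin p => (j : ℕ) < (c : ℕ) + 1)
      = insert c (Finset.univ.filter (fun j : Fin p => (j : ℕ) < (c : ℕ))) := by
    ext j
    simp only [Finset.mem_filter, Finset.mem_univ, true_and, Finset.mem_insert]
    constructor
    · intro hj
      rcases Nat.lt_succ_iff_lt_or_eq.mp hj with h | h
      · exact Or.inr h
      · exact Or.inl (Fin.val_injective h)
    · rintro (rfl | hj) <;> omega
  rw [h, Finset.sum_insert (by simp), add_comm]

lemma psum_top (i : Fin p → ℕ) {t : ℕ} (h : p ≤ t) : psum i t = ∑ j, i j := by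
  unfold psum
  rw [Finset.filter_true_of_mem (fun j _ => lt_of_lt_of_le j.isLt h)]

lemma card_filter_coe_lt {t : ℕ} (ht : t ≤ p) :
    (Finset.univ.filter fun j : Fin p => (j : ℕ) < t).card = t := by
  have h : (Finset.univ.filter fun j : Fin p => (j : ℕ) < t).card = (Finset.range t).card :=
    Finset.card_bij' (fun j _ => (j : ℕ))
      (fun n hn => ⟨n, lt_of_lt_of_le (Finset.mem_range.mp hn) ht⟩)
      (fun j hj => Finset.mem_range.mpr (by simpa using hj))
      (fun n hn => by simp [Finset.mem_range.mp hn])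
      (fun j hj => rfl) (fun n hn => rfl)
  simpa using h

lemma blockLabel_eq (i : Fin p → ℕ) (k : ℕ) :
    blockLabel i k = (Finset.univ.filter fun j : Fin p => psum i ((j : ℕ) + 1) ≤ k).card := by
  unfold blockLabel
  congr 1
  ext j
  simp only [Finset.mem_filter, Finset.mem_univ, true_and]
  have h : (∑ j' ∈ Finset.univ.filter (· ≤ j), i j') = psum i ((j : ℕ) + 1) := by
    unfold psum
    congr 1
    ext j'
    simp only [Finset.mem_filter, Finset.mem_univ, true_and, Fin.le_def, Nat.lt_succ_iff]
  rw [h]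

lemma blockLabel_lt (hp : 0 < p) (i : Fin p → ℕ) {k : ℕ} (hk : k < ∑ j, i j) :
    blockLabel i k < p := by
  rw [blockLabel_eq]
  have hne : (Finset.univ.filter fun j : Fin p => psum i ((j : ℕ) + 1) ≤ k) ≠ Finset.univ := by
    intro hEq
    have htop : (⟨p - 1, by omega⟩ : Fin p) ∈ Finset.univ.filter
        (fun j : Fin p => psum i ((j : ℕ) + 1) ≤ k) := by rw [hEq]; exact Finset.mem_univ _
    simp only [Finset.mem_filter, Finset.mem_univ, true_and] at htop
    have h2 : psum i ((p - 1 : ℕ) + 1) = ∑ j, i j := psum_top i (by omega)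
    omega
  have h := (Finset.card_lt_iff_ne_univ _).mpr hne
  simpa using h

lemma blockLabel_eq_iff (i : Fin p → ℕ) (k : ℕ) (c : Fin p) :
    blockLabel i k = (c : ℕ) ↔ psum i (c : ℕ) ≤ k ∧ k < psum i ((c : ℕ) + 1) := by
  constructor
  · intro h
    rw [blockLabel_eq] at h
    constructor
    · by_contra hlt
      push_neg at hlt
      rcases Nat.eq_zero_or_pos (c : ℕ) with hc | hc
      · rw [hc, psum_zero] at hlt; omega
      · have hsub : (Finset.univ.filter fun j : Fin p => psum i ((j : ℕ) + 1) ≤ k)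
            ⊆ Finset.univ.filter fun j : Fin p => (j : ℕ) < (c : ℕ) - 1 := by
          intro j hj
          simp only [Finset.mem_filter, Finset.mem_univ, true_and] at hj ⊢
          by_contra hcj
          push_neg at hcj
          have hm : psum i (c : ℕ) ≤ psum i ((j : ℕ) + 1) := psum_mono i (by omega)
          omega
        have hle := Finset.card_le_card hsub
        rw [card_filter_coe_lt (by omega : (c : ℕ) - 1 ≤ p)] at hle
        omega
    · by_contra hge
      push_neg at hge
      have hsub : (Finset.univ.filter fun j : Fin p => (j : ℕ) < (c : ℕ) + 1)
          ⊆ Finset.univ.filter fun j : Fin p => psum i ((j : ℕ) + 1) ≤ k := by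
        intro j hj
        simp only [Finset.mem_filter, Finset.mem_univ, true_and] at hj ⊢
        exact le_trans (psum_mono i (by omega)) hge
      have hle := Finset.card_le_card hsub
      rw [card_filter_coe_lt (by omega : (c : ℕ) + 1 ≤ p)] at hle
      omega
  · rintro ⟨h1, h2⟩
    rw [blockLabel_eq]
    have hfe : (Finset.univ.filter fun j : Fin p => psum i ((j : ℕ) + 1) ≤ k)
        = Finset.univ.filter fun j : Fin p => (j : ℕ) < (c : ℕ) := by
      ext j
      simp only [Finset.mem_filter, Finset.mem_univ, true_and]
      constructor
      · intro hj
        by_contra hcj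
        push_neg at hcj
        have hm : psum i ((c : ℕ) + 1) ≤ psum i ((j : ℕ) + 1) := psum_mono i (by omega)
        omega
      · intro hj
        exact le_trans (psum_mono i (by omega : (j : ℕ) + 1 ≤ (c : ℕ))) h1
    rw [hfe, card_filter_coe_lt c.isLt.le]

lemma card_blockLabel_fiber {i : Fin p → ℕ} (hsum : ∑ j, i j = m) (c : Fin p) :
    (Finset.univ.filter fun k : Fin m => blockLabel i (k : ℕ) = (c : ℕ)).card = i c := by
  have hub : psum i ((c : ℕ) + 1) ≤ m := by
    rw [← hsum, ← psum_top i (le_refl p)]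
    exact psum_mono i c.isLt
  have h : (Finset.univ.filter fun k : Fin m => blockLabel i (k : ℕ) = (c : ℕ)).card
      = (Finset.Ico (psum i (c : ℕ)) (psum i ((c : ℕ) + 1))).card :=
    Finset.card_bij' (fun k _ => (k : ℕ))
      (fun n hn => ⟨n, lt_of_lt_of_le (Finset.mem_Ico.mp hn).2 hub⟩)
      (fun k hk => by
        simp only [Finset.mem_filter, Finset.mem_univ, true_and] at hk
        exact Finset.mem_Ico.mpr ((blockLabel_eq_iff i k c).mp hk))
      (fun n hn => by
        simp only [Finset.mem_filter, Finset.mem_univ, true_and]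
        exact (blockLabel_eq_iff i n c).mpr (Finset.mem_Ico.mp hn))
      (fun k hk => rfl) (fun n hn => rfl)
  rw [h, Nat.card_Ico, psum_succ]
  omega

/-- The block-labelling function `Fin m → Fin p` associated to a composition. -/
def labelB (i : Fin p → ℕ) (hsum : ∑ j, i j = m) (hp : 0 < p) : Fin m → Fin p :=
  fun k => ⟨blockLabel i (k : ℕ), blockLabel_lt hp i (by rw [hsum]; exact k.isLt)⟩

lemma count_cosets {i : Fin p → ℕ} (hsum : ∑ j, i j = m) (hp : 0 < p) (x : Perm (Fin m)) :
    (Finset.univ.filter fun q : Perm (Fin m) ⧸ youngSubgroup m p i =>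
        (Quotient.out q)⁻¹ * x * Quotient.out q ∈ youngSubgroup m p i).card
      = (Finset.univ.filter fun L : Fin m → Fin p =>
          (∀ k, L (x k) = L k) ∧
            ∀ j, (Finset.univ.filter fun k => L k = j).card = i j).card := by
  classical
  set Y := youngSubgroup m p i with hY
  set B : Fin m → Fin p := labelB i hsum hp with hB
  set lab : Perm (Fin m) → (Fin m → Fin p) := fun s k => B (s⁻¹ k) with hlab
  have lab_coset : ∀ s t : Perm (Fin m), s⁻¹ * t ∈ Y → lab s = lab t := by
    intro s t h
    funext k
    have hk := h (t⁻¹ k)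
    simp only [Perm.mul_apply, ((fun t k => (eq_symm_apply t).mp rfl) : ∀ (t : Perm (Fin m)) (k : Fin m), t (t⁻¹ k) = k)] at hk
    apply Fin.ext
    simpa [hlab, hB, labelB] using hk
  have lab_inj : ∀ s t : Perm (Fin m), lab s = lab t → s⁻¹ * t ∈ Y := by
    intro s t h
    intro k
    have h2 := congrFun h (t k)
    simp only [hlab, hB, labelB, Fin.mk.injEq, ((fun t k => Perm.inv_eq_iff_eq.mpr rfl) : ∀ (t : Perm (Fin m)) (k : Fin m), t⁻¹ (t k) = k)] at h2
    simpa [Perm.mul_apply] using h2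
  refine Finset.card_bij (fun q _ => lab (Quotient.out q)) ?_ ?_ ?_
  · intro q hq
    simp only [Finset.mem_filter, Finset.mem_univ, true_and] at hq ⊢
    set s := Quotient.out q with hs
    constructor
    · intro k
      have hk := hq (s⁻¹ k)
      simp only [Perm.mul_apply, ((fun t k => (eq_symm_apply t).mp rfl) : ∀ (t : Perm (Fin m)) (k : Fin m), t (t⁻¹ k) = k)] at hk
      apply Fin.ext
      simpa [hlab, hB, labelB] using hk
    · intro j
      have hcard : (Finset.univ.filter fun k => lab s k = j).card
          = (Finset.univ.filter fun k : Fin m => B k = j).card :=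
        Finset.card_bij' (fun k _ => s⁻¹ k) (fun k _ => s k)
          (fun k hk => by
            simp only [Finset.mem_filter, Finset.mem_univ, true_and] at hk ⊢
            exact hk)
          (fun k hk => by
            simp only [Finset.mem_filter, Finset.mem_univ, true_and] at hk ⊢
            simpa [hlab] using hk)
          (fun k _ => by simp) (fun k _ => by simp)
      rw [hcard]
      have hBf : (Finset.univ.filter fun k : Fin m => B k = j)
          = Finset.univ.filter fun k : Fin m => blockLabel i (k : ℕ) = (j : ℕ) := by
        ext k
        simp [hB, labelB, Fin.ext_iff]
      rw [hBf, card_blockLabel_fiber hsum j]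
  · intro q1 h1 q2 h2 heq
    have hmem := lab_inj _ _ heq
    rw [← Quotient.out_eq' q1, ← Quotient.out_eq' q2]
    exact Quotient.sound' (QuotientGroup.leftRel_apply.mpr hmem)
  · intro L hL
    simp only [Finset.mem_filter, Finset.mem_univ, true_and] at hL
    obtain ⟨hinv, hfib⟩ := hL
    have hcfib : ∀ j, Fintype.card {k // L k = j} = Fintype.card {k // B k = j} := by
      intro j
      rw [Fintype.card_subtype, Fintype.card_subtype, hfib j]
      have hBf : (Finset.univ.filter fun k : Fin m => B k = j)
          = Finset.univ.filter fun k : Fin m => blockLabel i (k : ℕ) = (j : ℕ) := by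
        ext k
        simp [hB, labelB, Fin.ext_iff]
      rw [hBf, card_blockLabel_fiber hsum j]
    let fe : ∀ j, {k // L k = j} ≃ {k // B k = j} := fun j => Fintype.equivOfCardEq (hcfib j)
    let σ : Fin m ≃ Fin m := Equiv.ofFiberEquiv fe
    have hσ : ∀ k, B (σ k) = L k := fun k => Equiv.ofFiberEquiv_map fe k
    set s : Perm (Fin m) := σ.symm with hs
    have hlabs : lab s = L := by
      funext k
      have : s⁻¹ k = σ k := rfl
      rw [hlab]
      simp only [this]
      exact hσ k
    refine ⟨Quotient.mk'' s, ?_, ?_⟩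
    · simp only [Finset.mem_filter, Finset.mem_univ, true_and]
      have hco : ((Quotient.mk'' s : Perm (Fin m) ⧸ Y).out)⁻¹ * s ∈ Y :=
        QuotientGroup.leftRel_apply.mp (Quotient.mk_out' s)
      have hlabq : lab ((Quotient.mk'' s : Perm (Fin m) ⧸ Y).out) = L := by
        rw [lab_coset _ _ hco, hlabs]
      set t := (Quotient.mk'' s : Perm (Fin m) ⧸ Y).out with ht
      intro k
      have h1 := congrFun hlabq (x (t k))
      have h2 := congrFun hlabq (t k)
      have h3 : lab t (x (t k)) = lab t (t k) := by rw [h1, h2, hinv]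
      have h4 := congrArg Fin.val h3
      simp only [hlab, hB, labelB, ((fun t k => Perm.inv_eq_iff_eq.mpr rfl) : ∀ (t : Perm (Fin m)) (k : Fin m), t⁻¹ (t k) = k)] at h4
      simpa [Perm.mul_apply] using h4
    · have hco : ((Quotient.mk'' s : Perm (Fin m) ⧸ Y).out)⁻¹ * s ∈ Y :=
        QuotientGroup.leftRel_apply.mp (Quotient.mk_out' s)
      show lab (Quotient.out (Quotient.mk'' s)) = L
      rw [lab_coset _ _ hco, hlabs]

/-- The setoid of the same-cycle relation. -/
def scSetoid {m : ℕ} (x : Perm (Fin m)) : Setoid (Fin m) :=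
  ⟨x.SameCycle, ⟨Perm.SameCycle.refl x, fun h => h.symm, fun h h' => h.trans h'⟩⟩

lemma card_quotient_sameCycle {m : ℕ} (x : Perm (Fin m)) [Fintype (Quotient (scSetoid x))] :
    Fintype.card (Quotient (scSetoid x)) = numCycles x := by
  classical
  have hf : ∀ a b : Fin m, x.SameCycle a b →
      (fun k : Fin m => if h : x k = k then
          (Sum.inr ⟨k, h⟩ : {c // c ∈ x.cycleFactorsFinset} ⊕ {k : Fin m // x k = k})
        else Sum.inl ⟨x.cycleOf k, Perm.cycleOf_mem_cycleFactorsFinset_iff.mpr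
          (Perm.mem_support.mpr h)⟩) a
      = (fun k : Fin m => if h : x k = k then
          (Sum.inr ⟨k, h⟩ : {c // c ∈ x.cycleFactorsFinset} ⊕ {k : Fin m // x k = k})
        else Sum.inl ⟨x.cycleOf k, Perm.cycleOf_mem_cycleFactorsFinset_iff.mpr
          (Perm.mem_support.mpr h)⟩) b := by
    intro a b hab
    by_cases ha : x a = a
    · obtain ⟨n, hn⟩ := hab
      rw [← hn, Perm.zpow_apply_eq_self_of_apply_eq_self ha n]
    · have hb : ¬ x b = b := by
        intro hbf
        obtain ⟨n, hn⟩ := hab.symm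
        apply ha
        rw [← hn, Perm.zpow_apply_eq_self_of_apply_eq_self hbf n]
        exact hbf
      simp only [dif_neg ha, dif_neg hb]
      exact congrArg Sum.inl (Subtype.ext hab.cycleOf_eq)
  set φ : Quotient (scSetoid x) → ({c // c ∈ x.cycleFactorsFinset} ⊕ {k : Fin m // x k = k}) :=
    Quotient.lift _ (fun a b hab => hf a b hab) with hφ
  have hbij : Function.Bijective φ := by
    constructor
    · intro q1 q2
      refine Quotient.inductionOn₂ q1 q2 fun a b h => ?_
      simp only [hφ, Quotient.lift_mk] at h
      by_cases ha : x a = a <;> by_cases hb : x b = b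
      · rw [dif_pos ha, dif_pos hb] at h
        obtain rfl := Subtype.ext_iff.mp (Sum.inr.inj h)
        rfl
      · rw [dif_pos ha, dif_neg hb] at h; exact absurd h (by simp)
      · rw [dif_neg ha, dif_pos hb] at h; exact absurd h (by simp)
      · rw [dif_neg ha, dif_neg hb] at h
        have hcyc : x.cycleOf a = x.cycleOf b := Subtype.ext_iff.mp (Sum.inl.inj h)
        apply Quotient.sound
        show x.SameCycle a b
        by_contra hs
        have h2 : x.cycleOf a b = x b := by rw [hcyc]; exact x.cycleOf_apply_self b
        rw [Perm.cycleOf_apply, if_neg hs] at h2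
        exact hb h2.symm
    · rintro (⟨c, hc⟩ | ⟨k, hk⟩)
      · have hc' := Perm.mem_cycleFactorsFinset_iff.mp hc
        obtain ⟨a, ha⟩ := hc'.1.nonempty_support
        have hxa : ¬ x a = a := by
          have := hc'.2 a ha
          rw [← this]
          exact Perm.mem_support.mp ha
        refine ⟨Quotient.mk _ a, ?_⟩
        simp only [hφ, Quotient.lift_mk, dif_neg hxa]
        exact congrArg Sum.inl (Subtype.ext (Perm.cycle_is_cycleOf ha hc).symm)
      · exact ⟨Quotient.mk _ k, by simp [hφ, dif_pos hk]⟩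
  rw [Fintype.card_of_bijective hbij, Fintype.card_sum, Fintype.card_coe,
    Fintype.card_subtype]
  have h1 : x.cycleFactorsFinset.card = Multiset.card x.cycleType := by
    rw [Perm.cycleType_def, Multiset.card_map, Finset.card_def]
  have h2 : (Finset.univ.filter fun k : Fin m => x k = k).card = m - x.support.card := by
    have := Finset.card_filter_add_card_filter_not
      (s := (Finset.univ : Finset (Fin m))) (p := fun k => x k = k)
    have hsupp : x.support.card = (Finset.univ.filter fun k => ¬ x k = k).card := by
      congr 1
    rw [Finset.card_univ, Fintype.card_fin] at this
    omega
  unfold numCycles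
  rw [h1, h2, Perm.sum_cycleType]

lemma card_invariant_labelings {m : ℕ} (hp : 0 < p) (x : Perm (Fin m)) :
    (Finset.univ.filter fun L : Fin m → Fin p => ∀ k, L (x k) = L k).card
      = p ^ numCycles x := by
  classical
  rw [← Fintype.card_subtype]
  have e : {L : Fin m → Fin p // ∀ k, L (x k) = L k} ≃ (Quotient (scSetoid x) → Fin p) :=
    { toFun := fun L => Quotient.lift L.1 (by
        intro a b hab
        have key : ∀ n : ℕ, ∀ a : Fin m, L.1 ((x ^ n) a) = L.1 a := by
          intro n
          induction n with
          | zero => intro a; simp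
          | succ n ih =>
            intro a
            rw [pow_succ', Perm.mul_apply, L.2, ih]
        obtain ⟨n, _, rfl⟩ := hab.exists_pow_eq'
        exact (key n a).symm)
      invFun := fun F => ⟨fun k => F (Quotient.mk _ k), fun k =>
        congrArg F (Quotient.sound (Perm.sameCycle_apply_left.mpr (Perm.SameCycle.refl x k)))⟩
      left_inv := fun L => Subtype.ext rfl
      right_inv := fun F => funext fun q => Quotient.inductionOn q fun k => rfl }
  rw [Fintype.card_congr e, Fintype.card_fun, Fintype.card_fin,
    card_quotient_sameCycle x]

end Aux


/-- For every positive integer `m` and `p ≥ 1`, the endomorphism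
`t(m,p) = Σ_{i₁+⋯+i_p=m} Ind ∘ Res` of integer-valued class functions on `Σ_m` is
diagonal in the basis of characteristic functions of conjugacy classes, with eigenvalue
`p^{l_c}` on the class `c`, where `l_c` is the number of cycles of `c`: applied to the
characteristic function `δ` of the conjugacy class of `g`, it returns `p^{l_g}·δ`. -/
theorem indRes_sum_young_charFun_eq (m p : ℕ) (hm : 0 < m) (hp : 1 ≤ p)
    (g : Perm (Fin m)) (δ : IntClassFun (Perm (Fin m)))
    (hδ : ∀ x, δ.1 x = if IsConj g x then 1 else 0) :
    ∀ x : Perm (Fin m),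
      (∑ᶠ (i : Fin p → ℕ) (_ : ∑ j, i j = m), indRes (youngSubgroup m p i) δ x)
        = (p : ℤ) ^ numCycles g * δ.1 x := by
  intro x
  classical
  have hp0 : 0 < p := hp
  rw [finsum_cond_eq_sum_of_cond_iff _
    (fun {i} _ => Finset.Nat.mem_antidiagonalTuple.symm)]
  have hterm : ∀ i ∈ Finset.Nat.antidiagonalTuple p m,
      indRes (youngSubgroup m p i) δ x
        = (((Finset.univ.filter fun q : Perm (Fin m) ⧸ youngSubgroup m p i =>
            (Quotient.out q)⁻¹ * x * Quotient.out q ∈ youngSubgroup m p i).card : ℕ) : ℤ)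
            * δ.1 x := by
    intro i _
    have step : indRes (youngSubgroup m p i) δ x
        = ∑ q : Perm (Fin m) ⧸ youngSubgroup m p i,
            (if (Quotient.out q)⁻¹ * x * Quotient.out q ∈ youngSubgroup m p i
              then δ.1 x else 0) := by
      unfold indRes
      rw [finsum_eq_sum_of_fintype]
      refine Finset.sum_congr rfl fun q _ => ?_
      conv_lhs => rw [← Quotient.out_eq' q, Quotient.liftOn'_mk'']
      have hδs : δ.1 ((Quotient.out q)⁻¹ * x * Quotient.out q) = δ.1 x := by
        simpa using δ.2 x (Quotient.out q)⁻¹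
      rw [hδs]
    rw [step, ← Finset.sum_filter, Finset.sum_const, nsmul_eq_mul]
  rw [Finset.sum_congr rfl hterm, ← Finset.sum_mul]
  by_cases hx : δ.1 x = 0
  · rw [hx, mul_zero, mul_zero]
  · have hconj : IsConj g x := by
      by_contra hc
      rw [hδ x, if_neg hc] at hx
      exact hx rfl
    have hnc : numCycles x = numCycles g := by
      obtain ⟨c, hc⟩ := isConj_iff.mp hconj
      unfold numCycles
      rw [← hc, Perm.cycleType_conj]
    have key : ∑ i ∈ Finset.Nat.antidiagonalTuple p m,
        (Finset.univ.filter fun q : Perm (Fin m) ⧸ youngSubgroup m p i =>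
          (Quotient.out q)⁻¹ * x * Quotient.out q ∈ youngSubgroup m p i).card
        = p ^ numCycles x := by
      rw [← card_invariant_labelings hp0 x]
      have hmaps : ∀ L ∈ (Finset.univ.filter
          fun L : Fin m → Fin p => ∀ k, L (x k) = L k),
          (fun j => (Finset.univ.filter fun k => L k = j).card)
            ∈ Finset.Nat.antidiagonalTuple p m := by
        intro L _
        rw [Finset.Nat.mem_antidiagonalTuple]
        have h := Finset.card_eq_sum_card_fiberwise
          (f := L) (s := Finset.univ) (t := Finset.univ)
          (fun k _ => Finset.mem_univ (L k))
        rw [Finset.card_univ, Fintype.card_fin] at h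
        exact h.symm
      rw [Finset.card_eq_sum_card_fiberwise hmaps]
      refine Finset.sum_congr rfl fun i hi => ?_
      have hsum := Finset.Nat.mem_antidiagonalTuple.mp hi
      rw [count_cosets hsum hp0 x]
      congr 1
      rw [Finset.filter_filter]
      apply Finset.filter_congr
      intro L _
      constructor
      · rintro ⟨h1, h2⟩
        exact ⟨h1, funext h2⟩
      · rintro ⟨h1, h2⟩
        exact ⟨h1, fun j => congrFun h2 j⟩
    congr 1
    rw [← hnc]
    exact_mod_cast key
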